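/- arXiv:2602.00644 — 2 statements merged into one kernel-verified Lean document; each statement's English description precedes it below -/
import Mathlib

section
/- Fix integers h ≥ 2 and n ≥ 1 with n = q·h + r, 0 ≤ r < h. If a partition of an n-element set into blocks of size at most h contains two distinct blocks B_1, B_2 with |B_1| ≤ |B_2| ≤ h − 1, then it does not minimize the number of cross pairs Σ_{i<j} |B_i|·|B_j|; that is, any minimizing partition has at most one block of size strictly less than h. -/
lemma choose2_add (x y : ℕ) : (x + y).choose 2 = x.choose 2 + y.choose 2 + x * y := by
  induction y with
  | zero => simp
  | succ y ih =>
    have h1 : (x + (y + 1)).choose 2 = (x + y).choose 1 + (x + y).choose 2 := by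
      rw [show x + (y + 1) = (x + y) + 1 from by ring, Nat.choose_succ_succ]
    have h2 : (y + 1).choose 2 = y.choose 1 + y.choose 2 := Nat.choose_succ_succ _ _
    simp only [Nat.choose_one_right] at h1 h2
    rw [h1, h2, ih]; ring

lemma sum_choose2_le {β : Type*} (t : Finset β) (f : β → ℕ) :
    (∑ i ∈ t, (f i).choose 2) ≤ (∑ i ∈ t, f i).choose 2 := by
  induction t using Finset.cons_induction with
  | empty => simp
  | cons a t ha ih =>
    rw [Finset.sum_cons, Finset.sum_cons, choose2_add]
    omega

theorem stmt7 {α : Type*} [DecidableEq α] (s : Finset α) (n h q r : ℕ)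
    (hcard : s.card = n) (hh : 2 ≤ h) (hn : 1 ≤ n) (hqr : n = q * h + r) (hr : r < h)
    (P : Finpartition s) (hP : ∀ B ∈ P.parts, B.card ≤ h)
    (B1 B2 : Finset α) (hB1 : B1 ∈ P.parts) (hB2 : B2 ∈ P.parts) (hne : B1 ≠ B2)
    (h12 : B1.card ≤ B2.card) (h2h : B2.card ≤ h - 1) :
    ∃ P' : Finpartition s, (∀ B ∈ P'.parts, B.card ≤ h) ∧
      n.choose 2 - ∑ B ∈ P'.parts, B.card.choose 2 <
        n.choose 2 - ∑ B ∈ P.parts, B.card.choose 2 := by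
  classical
  have hdisj12 : Disjoint B1 B2 := P.disjoint hB1 hB2 hne
  have ha1 : 1 ≤ B1.card := Finset.card_pos.mpr (P.nonempty_of_mem_parts hB1)
  set a := B1.card with haa
  set b := B2.card with hbb
  set k := min a (h - b) with hk
  have hk1 : 1 ≤ k := le_min ha1 (by omega)
  have hka : k ≤ a := min_le_left _ _
  have hkb : b + k ≤ h := by have := min_le_right a (h - b); omega
  obtain ⟨u, hu, huc⟩ : ∃ u ⊆ B1, u.card = k := Finset.exists_subset_card_eq hka
  set C1 := B2 ∪ u with hC1def
  set C2 := B1 \ u with hC2def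
  have huB2 : Disjoint B2 u := hdisj12.symm.mono_right hu
  have hdC1C2 : Disjoint C1 C2 := by
    rw [hC1def, Finset.disjoint_union_left]
    exact ⟨hdisj12.symm.mono_right Finset.sdiff_subset, Finset.disjoint_sdiff⟩
  have hC12 : C1 ∪ C2 = B1 ∪ B2 := by
    rw [hC1def, hC2def, Finset.union_assoc, Finset.union_sdiff_of_subset hu,
      Finset.union_comm]
  have hC1c : C1.card = b + k := by
    rw [hC1def, Finset.card_union_of_disjoint huB2, huc]
  have hC2c : C2.card = a - k := by rw [hC2def, Finset.card_sdiff_of_subset hu, huc]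
  have hC1ne : C1.Nonempty := (P.nonempty_of_mem_parts hB2).mono Finset.subset_union_left
  set base := (P.parts.erase B1).erase B2 with hbase
  have hbasemem : ∀ X ∈ base, X ∈ P.parts ∧ X ≠ B1 ∧ X ≠ B2 := by
    intro X hX
    simp only [hbase, Finset.mem_erase] at hX
    exact ⟨hX.2.2, hX.2.1, hX.1⟩
  have hbase12 : ∀ X ∈ base, Disjoint X (B1 ∪ B2) := by
    intro X hX
    obtain ⟨hXP, hX1, hX2⟩ := hbasemem X hX
    rw [Finset.disjoint_union_right]
    exact ⟨P.disjoint hXP hB1 hX1, P.disjoint hXP hB2 hX2⟩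
  have hC1sub : C1 ⊆ B1 ∪ B2 := by
    rw [hC1def]
    exact Finset.union_subset (Finset.subset_union_right)
      (hu.trans Finset.subset_union_left)
  have hC2sub : C2 ⊆ B1 ∪ B2 := Finset.sdiff_subset.trans Finset.subset_union_left
  have hparts_eq : insert B1 (insert B2 base) = P.parts := by
    rw [hbase, Finset.insert_erase (Finset.mem_erase.mpr ⟨Ne.symm hne, hB2⟩),
      Finset.insert_erase hB1]
  -- the new parts (before erasing ⊥)
  set Q0 : Finset (Finset α) := insert C1 (insert C2 base) with hQ0
  have hsupindep : Q0.SupIndep id := by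
    rw [Finset.supIndep_iff_pairwiseDisjoint]
    intro x hx y hy hxy
    simp only [hQ0, Finset.coe_insert, Set.mem_insert_iff, Finset.mem_coe] at hx hy
    have key : ∀ z ∈ base, Disjoint C1 z ∧ Disjoint C2 z := fun z hz =>
      ⟨((hbase12 z hz).mono_right hC1sub).symm, ((hbase12 z hz).mono_right hC2sub).symm⟩
    rcases hx with rfl | rfl | hx <;> rcases hy with rfl | rfl | hy
    · exact absurd rfl hxy
    · exact hdC1C2
    · exact (key y hy).1
    · exact hdC1C2.symm
    · exact absurd rfl hxy
    · exact (key y hy).2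
    · exact ((key x hx).1).symm
    · exact ((key x hx).2).symm
    · exact P.disjoint (hbasemem x hx).1 (hbasemem y hy).1 hxy
  have hsup : Q0.sup id = s := by
    have h1 : Q0.sup id = C1 ⊔ (C2 ⊔ base.sup id) := by
      rw [hQ0, Finset.sup_insert, Finset.sup_insert]; rfl
    have h2 : (insert B1 (insert B2 base)).sup id = B1 ⊔ (B2 ⊔ base.sup id) := by
      rw [Finset.sup_insert, Finset.sup_insert]; rfl
    have h3 : B1 ⊔ (B2 ⊔ base.sup id) = s := by rw [← h2, hparts_eq, P.sup_parts]
    rw [h1, ← h3]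
    have : C1 ⊔ C2 = B1 ⊔ B2 := hC12
    rw [← sup_assoc, ← sup_assoc, this]
  set P' : Finpartition s := Finpartition.ofErase Q0 hsupindep hsup with hP'
  have hP'parts : P'.parts = Q0.erase ∅ := rfl
  -- sums
  have hC1nb : C1 ∉ insert C2 base := by
    intro hmem
    rcases Finset.mem_insert.mp hmem with heq | hmem
    · exact hC1ne.ne_empty (by have h0 : Disjoint C1 C1 := heq ▸ hdC1C2; simpa using disjoint_self.mp h0)
    · have := ((hbase12 C1 hmem).mono_right hC1sub)
      exact hC1ne.ne_empty (by simpa using disjoint_self.mp this)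
  have hC2nb : C2 ∉ base := by
    intro hmem
    have hd := (hbase12 C2 hmem).mono_right hC2sub
    have he : C2 = ∅ := by simpa using disjoint_self.mp hd
    exact P.bot_notMem (by rw [← Finset.bot_eq_empty, ← he] at *; exact (hbasemem C2 hmem).1)
  have hsumQ0 : ∑ B ∈ Q0, B.card.choose 2
      = (b + k).choose 2 + ((a - k).choose 2 + ∑ B ∈ base, B.card.choose 2) := by
    rw [hQ0, Finset.sum_insert hC1nb, Finset.sum_insert hC2nb, hC1c, hC2c]
  have hB1nb : B1 ∉ insert B2 base := by
    simp only [Finset.mem_insert, hbase, Finset.mem_erase]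
    push_neg
    exact ⟨hne, fun h1 h2 => absurd rfl h2⟩
  have hB2nb : B2 ∉ base := fun hmem => (hbasemem B2 hmem).2.2 rfl
  have hsumP : ∑ B ∈ P.parts, B.card.choose 2
      = a.choose 2 + (b.choose 2 + ∑ B ∈ base, B.card.choose 2) := by
    rw [← hparts_eq, Finset.sum_insert hB1nb, Finset.sum_insert hB2nb]
  have hsumP' : ∑ B ∈ P'.parts, B.card.choose 2 = ∑ B ∈ Q0, B.card.choose 2 := by
    rw [hP'parts]
    by_cases hmem : (∅ : Finset α) ∈ Q0
    · have h0 := Finset.add_sum_erase Q0 (fun B : Finset α => B.card.choose 2) hmem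
      simpa using h0
    · rw [Finset.erase_eq_of_notMem hmem]
  -- strict increase of internal pairs
  have hstrict : a.choose 2 + b.choose 2 < (b + k).choose 2 + (a - k).choose 2 := by
    have e2 := choose2_add (a - k) k
    rw [show a - k + k = a from by omega] at e2
    have e3 : (b + k).choose 2 = b.choose 2 + k.choose 2 + b * k := choose2_add _ _
    have hlt : (a - k) * k < b * k :=
      Nat.mul_lt_mul_of_lt_of_le (by omega) le_rfl (by omega)
    omega
  -- upper bound
  have hub : ∑ B ∈ P'.parts, B.card.choose 2 ≤ n.choose 2 := by
    calc ∑ B ∈ P'.parts, B.card.choose 2 ≤ (∑ B ∈ P'.parts, B.card).choose 2 :=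
          sum_choose2_le _ _
      _ = n.choose 2 := by rw [P'.sum_card_parts, hcard]
  refine ⟨P', ?_, ?_⟩
  · intro B hB
    rw [hP'parts] at hB
    have hB' := Finset.mem_of_mem_erase hB
    rcases Finset.mem_insert.mp hB' with rfl | hB'
    · omega
    · rcases Finset.mem_insert.mp hB' with rfl | hB'
      · have hah := hP B1 hB1; omega
      · exact hP B (hbasemem B hB').1
  · have := hsumP
    have := hsumP'
    have := hsumQ0
    omega
end

section
/- Let G be a finite connected graph with more than h vertices, and suppose F ⊆ E(G) is such that every connected component of G \ F has at most h vertices. Then there exists a vertex set A with ⌈h/2⌉ ≤ |A| ≤ h such that every edge of G with exactly one endpoint in A belongs to F; in particular, the number of edges of G between A and V(G) \ A is at most |F|. -/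
open Finset in
lemma aux_subsum {α : Type*} [DecidableEq α] (h : ℕ) (f : α → ℕ) :
    ∀ s : Finset α, (∀ a ∈ s, f a ≤ h) → (h + 1) / 2 ≤ ∑ a ∈ s, f a →
      ∃ t ⊆ s, (h + 1) / 2 ≤ ∑ a ∈ t, f a ∧ ∑ a ∈ t, f a ≤ h := by
  intro s
  induction s using Finset.strongInduction with
  | _ s ih =>
    intro hle hsum
    by_cases hs : ∑ a ∈ s, f a ≤ h
    · exact ⟨s, subset_rfl, hsum, hs⟩
    · push_neg at hs
      have hne : s.Nonempty := by
        rcases s.eq_empty_or_nonempty with rfl | hn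
        · simp only [Finset.sum_empty] at hs; omega
        · exact hn
      obtain ⟨a, ha⟩ := hne
      by_cases hfa : (h + 1) / 2 ≤ f a
      · exact ⟨{a}, by simpa using ha, by simpa using hfa, by simpa using hle a ha⟩
      · push_neg at hfa
        have hsub : s.erase a ⊂ s := Finset.erase_ssubset ha
        have hsum' : ∑ x ∈ s.erase a, f x = ∑ x ∈ s, f x - f a := by
          have := Finset.add_sum_erase s f ha; omega
        have : (h + 1) / 2 ≤ ∑ x ∈ s.erase a, f x := by omega
        obtain ⟨t, ht, h1, h2⟩ := ih _ hsub (fun x hx => hle x (Finset.mem_of_mem_erase hx)) this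
        exact ⟨t, ht.trans (Finset.erase_subset _ _), h1, h2⟩

theorem stmt10 {V : Type*} [Fintype V] (G : SimpleGraph V) (h : ℕ) (hh : 1 ≤ h)
    (hconn : G.Connected) (hbig : h < Fintype.card V) (F : Set (Sym2 V))
    (hF : ∀ v, ((G.deleteEdges F).connectedComponentMk v).supp.ncard ≤ h) :
    ∃ A : Set V, (h + 1) / 2 ≤ A.ncard ∧ A.ncard ≤ h ∧
      (∀ u v, G.Adj u v → u ∈ A → v ∉ A → s(u, v) ∈ F) ∧
      {e ∈ G.edgeSet | ∃ u v, e = s(u, v) ∧ u ∈ A ∧ v ∉ A}.ncard ≤ F.ncard := by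
  classical
  set G' := G.deleteEdges F with hG'
  have hfin : Finite G'.ConnectedComponent := Quot.finite _
  have : Fintype G'.ConnectedComponent := Fintype.ofFinite _
  set f : G'.ConnectedComponent → ℕ := fun c => c.supp.toFinset.card with hf
  have hncard : ∀ c : G'.ConnectedComponent, c.supp.ncard = f c := by
    intro c; exact Set.ncard_eq_toFinset_card' _
  have hle : ∀ c : G'.ConnectedComponent, f c ≤ h := by
    intro c
    obtain ⟨v, rfl⟩ := c.exists_rep
    exact (hncard (G'.connectedComponentMk v)).symm.le.trans (hF v)
  have hdisj : ∀ c c' : G'.ConnectedComponent, c ≠ c' →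
      Disjoint c.supp.toFinset c'.supp.toFinset := by
    intro c c' hne
    rw [Set.disjoint_toFinset]
    exact G'.pairwise_disjoint_supp_connectedComponent hne
  have huniv : (Finset.univ : Finset V) =
      (Finset.univ : Finset G'.ConnectedComponent).biUnion (fun c => c.supp.toFinset) := by
    ext v
    simp only [Finset.mem_univ, Finset.mem_biUnion, Set.mem_toFinset, true_iff]
    exact ⟨G'.connectedComponentMk v, trivial, rfl⟩
  have hsum : ∑ c : G'.ConnectedComponent, f c = Fintype.card V := by
    rw [← Finset.card_univ, huniv, Finset.card_biUnion]
    intro c _ c' _ hne; exact hdisj c c' hne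
  obtain ⟨t, -, h1, h2⟩ := aux_subsum h f Finset.univ (fun a _ => hle a)
    (by rw [hsum]; omega)
  set A : Set V := ↑(t.biUnion (fun c => c.supp.toFinset)) with hA
  have hAcard : A.ncard = ∑ c ∈ t, f c := by
    rw [hA, Set.ncard_coe_finset, Finset.card_biUnion]
    intro c _ c' _ hne; exact hdisj c c' hne
  have hmemA : ∀ v : V, v ∈ A ↔ G'.connectedComponentMk v ∈ t := by
    intro v
    simp only [hA, Finset.coe_biUnion, Set.mem_iUnion, Set.mem_toFinset,
      SimpleGraph.ConnectedComponent.mem_supp_iff, Finset.mem_coe]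
    constructor
    · rintro ⟨c, hc, rfl⟩; exact hc
    · intro hc; exact ⟨_, hc, rfl⟩
  have hedge : ∀ u v, G.Adj u v → u ∈ A → v ∉ A → s(u, v) ∈ F := by
    intro u v hadj hu hv
    by_contra hne
    have hadj' : G'.Adj u v := by
      rw [hG', SimpleGraph.deleteEdges_adj]; exact ⟨hadj, hne⟩
    have : G'.connectedComponentMk u = G'.connectedComponentMk v :=
      SimpleGraph.ConnectedComponent.sound hadj'.reachable
    rw [hmemA] at hu hv
    rw [this] at hu
    exact hv hu
  refine ⟨A, by omega, by omega, hedge, ?_⟩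
  refine Set.ncard_le_ncard ?_ F.toFinite
  rintro e ⟨he, u, v, rfl, hu, hv⟩
  exact hedge u v ((SimpleGraph.mem_edgeSet G).mp he) hu hv
end
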